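/- Demiclosedness of the convexified gradient map: Let f_i : H → ℝ, i = 1,...,q, be C¹ with gradients that are weak-to-strong continuous along bounded sequences (e.g. H finite dimensional, or ∇f_i compact). If u_n* ∈ co{∇f_i(u_n)}, u_n* → 0 strongly and u_n ⇀ u_∞ weakly, then 0 ∈ co{∇f_i(u_∞)}. -/

import Mathlib

open scoped RealInnerProductSpace
open Filter

lemma convexHull_range_eq_image_stdSimplex {E : Type*} [AddCommGroup E] [Module ℝ E]
    {q : ℕ} (z : Fin q → E) :
    convexHull ℝ (Set.range z) =
      (fun w : Fin q → ℝ => ∑ i, w i • z i) '' stdSimplex ℝ (Fin q) := by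
  let L : (Fin q → ℝ) →ₗ[ℝ] E := ∑ i, (LinearMap.proj i).smulRight (z i)
  have hL : ∀ w, L w = ∑ i, w i • z i := by
    intro w; simp [L, LinearMap.sum_apply]
  have hfun : (fun w : Fin q → ℝ => ∑ i, w i • z i) = ⇑L := funext fun w => (hL w).symm
  rw [hfun, ← convexHull_basis_eq_stdSimplex (R := ℝ) (Fin q), LinearMap.image_convexHull,
    ← Set.range_comp]
  congr 1
  ext j
  simp [Function.comp, hL, ite_smul, Finset.sum_ite_eq]

/-- Demiclosedness of the convexified gradient map: if the gradients are
weak-to-strong continuous along bounded sequences, `u_n* ∈ co{∇f_i(u_n)}`,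
`u_n* → 0` strongly and `u_n ⇀ u_∞` weakly, then `0 ∈ co{∇f_i(u_∞)}`. -/
theorem demiclosed_convexified_gradient
    {H : Type*} [NormedAddCommGroup H] [InnerProductSpace ℝ H] [CompleteSpace H]
    {q : ℕ} (f : Fin q → H → ℝ) (hf : ∀ i, ContDiff ℝ 1 (f i))
    (hws : ∀ (i : Fin q) (x : ℕ → H) (xlim : H),
      Bornology.IsBounded (Set.range x) →
      (∀ y : H, Tendsto (fun n => ⟪x n, y⟫) atTop (nhds ⟪xlim, y⟫)) →
      Tendsto (fun n => gradient (f i) (x n)) atTop (nhds (gradient (f i) xlim)))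
    (u ustar : ℕ → H) (ulim : H)
    (hmem : ∀ n, ustar n ∈ convexHull ℝ (Set.range fun i => gradient (f i) (u n)))
    (hstar : Tendsto ustar atTop (nhds (0 : H)))
    (hweak : ∀ y : H, Tendsto (fun n => ⟪u n, y⟫) atTop (nhds ⟪ulim, y⟫)) :
    (0 : H) ∈ convexHull ℝ (Set.range fun i => gradient (f i) ulim) := by
  -- extract simplex weights
  have hrep : ∀ n, ∃ θ ∈ stdSimplex ℝ (Fin q),
      ∑ i, θ i • gradient (f i) (u n) = ustar n := by
    intro n
    have h := hmem n
    rw [convexHull_range_eq_image_stdSimplex] at h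
    obtain ⟨θ, hθ, hθ2⟩ := h
    exact ⟨θ, hθ, hθ2⟩
  choose θ hθmem hθeq using hrep
  -- boundedness of u via Banach–Steinhaus
  have hub : Bornology.IsBounded (Set.range u) := by
    have h1 : ∀ y : H, ∃ C, ∀ n, ‖(innerSL ℝ (u n)) y‖ ≤ C := by
      intro y
      have ht : Tendsto (fun n => ‖⟪u n, y⟫‖) atTop (nhds ‖⟪ulim, y⟫‖) :=
        (continuous_norm.tendsto _).comp (hweak y)
      obtain ⟨C, hC⟩ := ht.bddAbove_range
      exact ⟨C, fun n => hC (Set.mem_range_self n)⟩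
    obtain ⟨C', hC'⟩ := banach_steinhaus (g := fun n => innerSL ℝ (u n)) h1
    rw [isBounded_iff_forall_norm_le]
    refine ⟨C', ?_⟩
    rintro x ⟨n, rfl⟩
    simpa [innerSL_apply_norm] using hC' n
  -- compactness of the simplex: extract converging subsequence of weights
  obtain ⟨θlim, hθlim, φ, hφ, hθconv⟩ :=
    (isCompact_stdSimplex ℝ (Fin q)).tendsto_subseq hθmem
  -- along the subsequence, gradients converge strongly
  have hsub : ∀ i, Tendsto (fun n => gradient (f i) (u (φ n))) atTop
      (nhds (gradient (f i) ulim)) := by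
    intro i
    refine hws i (u ∘ φ) ulim ?_ ?_
    · exact hub.subset (by rw [Set.range_comp]; exact Set.image_subset_range _ _)
    · intro y
      exact (hweak y).comp hφ.tendsto_atTop
  -- the convex combinations converge
  have hcomb : Tendsto (fun n => ∑ i, θ (φ n) i • gradient (f i) (u (φ n))) atTop
      (nhds (∑ i, θlim i • gradient (f i) ulim)) := by
    refine tendsto_finset_sum _ (fun i _ => Tendsto.smul ?_ (hsub i))
    exact ((continuous_apply i).tendsto _).comp hθconv
  have hzero : Tendsto (fun n => ∑ i, θ (φ n) i • gradient (f i) (u (φ n))) atTop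
      (nhds (0 : H)) := by
    simpa [hθeq, Function.comp_def] using hstar.comp hφ.tendsto_atTop
  have heq : (0 : H) = ∑ i, θlim i • gradient (f i) ulim :=
    tendsto_nhds_unique hzero hcomb
  rw [convexHull_range_eq_image_stdSimplex]
  exact ⟨θlim, hθlim, heq.symm⟩
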